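/- Let ρ₁, ρ₂ be quantum states on ℂ^d. Then there exist a₀ ∈ [0,1] and a two-outcome POVM (B₁, B₂) that is Bayes-optimal for the prior (a₀, 1−a₀) and satisfies Tr[ρ₁B₁] = Tr[ρ₂B₂]. -/

import Mathlib

open Matrix ComplexOrder

/-- A quantum state on `ℂ^d`: a positive semidefinite matrix with unit trace. -/
def IsQState {d : ℕ} (ρ : Matrix (Fin d) (Fin d) ℂ) : Prop :=
  ρ.PosSemidef ∧ ρ.trace = 1

/-- A two-outcome POVM: two positive semidefinite matrices summing to the identity. -/
def IsPOVM2 {d : ℕ} (P₁ P₂ : Matrix (Fin d) (Fin d) ℂ) : Prop :=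
  P₁.PosSemidef ∧ P₂.PosSemidef ∧ P₁ + P₂ = 1

/-- `(B₁, B₂)` is Bayes-optimal for the prior `(a, 1-a)` and states `ρ₁, ρ₂`:
it is a POVM maximizing `a·Tr[ρ₁P₁] + (1-a)·Tr[ρ₂P₂]` over all two-outcome POVMs. -/
def IsBayesOpt {d : ℕ} (ρ₁ ρ₂ : Matrix (Fin d) (Fin d) ℂ) (a : ℝ)
    (B₁ B₂ : Matrix (Fin d) (Fin d) ℂ) : Prop :=
  IsPOVM2 B₁ B₂ ∧ ∀ P₁ P₂ : Matrix (Fin d) (Fin d) ℂ, IsPOVM2 P₁ P₂ →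
    a * ((ρ₁ * P₁).trace.re) + (1 - a) * ((ρ₂ * P₂).trace.re) ≤
      a * ((ρ₁ * B₁).trace.re) + (1 - a) * ((ρ₂ * B₂).trace.re)


namespace BayesAux

variable {d : ℕ}



def K (d : ℕ) : Set (Matrix (Fin d) (Fin d) ℂ) :=
  {P | P.PosSemidef ∧ (1 - P).PosSemidef}

lemma zero_mem_K : (0 : Matrix (Fin d) (Fin d) ℂ) ∈ K d :=
  ⟨Matrix.PosSemidef.zero, by simpa using Matrix.PosSemidef.one⟩

lemma one_mem_K : (1 : Matrix (Fin d) (Fin d) ℂ) ∈ K d :=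
  ⟨Matrix.PosSemidef.one, by simpa using Matrix.PosSemidef.zero⟩

lemma trace_re_nonneg {M : Matrix (Fin d) (Fin d) ℂ} (hM : M.PosSemidef) :
    0 ≤ M.trace.re := by
  rw [Matrix.trace, Complex.re_sum]
  refine Finset.sum_nonneg fun i _ => ?_
  have := hM.dotProduct_mulVec_nonneg (Pi.single i 1)
  rw [Complex.nonneg_iff] at this
  simpa [Matrix.diag, dotProduct, Matrix.mulVec, Pi.single_apply] using this.1

open scoped MatrixOrder in
lemma trace_mul_re_nonneg {A B : Matrix (Fin d) (Fin d) ℂ}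
    (hA : A.PosSemidef) (hB : B.PosSemidef) : 0 ≤ (A * B).trace.re := by
  have h2 : (A * B).trace = (CFC.sqrt A * B * CFC.sqrt A).trace := by
    conv_lhs => rw [← CFC.sqrt_mul_sqrt_self A hA.nonneg, mul_assoc, Matrix.trace_mul_comm]
  have h3 : (CFC.sqrt A * B * CFC.sqrt A).PosSemidef := by
    have := hB.conjTranspose_mul_mul_same (CFC.sqrt A)
    rwa [(CFC.sqrt_nonneg A).posSemidef.isHermitian.eq] at this
  rw [h2]; exact trace_re_nonneg h3

lemma isClosed_posSemidef :
    IsClosed {P : Matrix (Fin d) (Fin d) ℂ | P.PosSemidef} := by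
  have h1 : IsClosed {P : Matrix (Fin d) (Fin d) ℂ | P.IsHermitian} := by
    have : {P : Matrix (Fin d) (Fin d) ℂ | P.IsHermitian} = {P | Pᴴ - P = 0} := by
      ext P; simp [Matrix.IsHermitian, sub_eq_zero]
    rw [this]
    exact isClosed_eq ((continuous_id.matrix_conjTranspose).sub continuous_id)
      continuous_const
  have h2 : ∀ x : Fin d → ℂ, IsClosed {P : Matrix (Fin d) (Fin d) ℂ |
      0 ≤ dotProduct (star x) (P.mulVec x)} := by
    intro x
    have hc : Continuous fun P : Matrix (Fin d) (Fin d) ℂ =>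
        dotProduct (star x) (P.mulVec x) :=
      (continuous_const.dotProduct (continuous_id.matrix_mulVec continuous_const))
    have : {P : Matrix (Fin d) (Fin d) ℂ | 0 ≤ dotProduct (star x) (P.mulVec x)}
        = (fun P : Matrix (Fin d) (Fin d) ℂ => dotProduct (star x) (P.mulVec x)) ⁻¹'
          {z : ℂ | 0 ≤ z.re ∧ z.im = 0} := by
      ext P; simp [Complex.nonneg_iff, eq_comm]
    rw [this]
    exact ((isClosed_le continuous_const Complex.continuous_re).inter
      (isClosed_eq Complex.continuous_im continuous_const)).preimage hc
  have : {P : Matrix (Fin d) (Fin d) ℂ | P.PosSemidef}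
      = {P | P.IsHermitian} ∩ ⋂ x, {P | 0 ≤ dotProduct (star x) (P.mulVec x)} := by
    ext P
    simp only [Set.mem_setOf_eq, Set.mem_inter_iff, Set.mem_iInter]
    exact Matrix.posSemidef_iff_dotProduct_mulVec
  rw [this]
  exact h1.inter (isClosed_iInter h2)

lemma isClosed_K : IsClosed (K d) := by
  have : K d = {P : Matrix (Fin d) (Fin d) ℂ | P.PosSemidef} ∩
      (fun P : Matrix (Fin d) (Fin d) ℂ => 1 - P) ⁻¹' {P | P.PosSemidef} := rfl
  rw [this]
  exact isClosed_posSemidef.inter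
    (isClosed_posSemidef.preimage (continuous_const.sub continuous_id))

lemma entry_norm_le {P : Matrix (Fin d) (Fin d) ℂ}
    (h1 : P.PosSemidef) (h2 : (1 - P).PosSemidef) (i j : Fin d) :
    ‖P i j‖ ≤ Real.sqrt d := by
  have htr : P.trace.re ≤ d := by
    have h := trace_re_nonneg h2
    rw [Matrix.trace_sub, Matrix.trace_one, Complex.sub_re] at h
    simp only [Complex.natCast_re] at h
    rw [Fintype.card_fin] at h
    linarith
  have hPP : (P * P).trace.re ≤ P.trace.re := by
    have h := trace_mul_re_nonneg h1 h2
    rw [mul_sub, mul_one, Matrix.trace_sub, Complex.sub_re] at h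
    linarith
  have hsum : (P * P).trace.re = ∑ k, ∑ l, ‖P l k‖ ^ 2 := by
    have : P * P = Pᴴ * P := by rw [h1.isHermitian.eq]
    rw [this, Matrix.trace, Complex.re_sum]
    congr 1; ext k
    rw [Matrix.diag, Matrix.mul_apply, Complex.re_sum]
    congr 1; ext l
    rw [Matrix.conjTranspose_apply]
    rw [show (star (P l k) * P l k) = ((‖P l k‖ ^ 2 : ℝ) : ℂ) by
      rw [Complex.star_def, ← Complex.normSq_eq_conj_mul_self, Complex.normSq_eq_norm_sq]]
    exact Complex.ofReal_re _
  have hone : ‖P i j‖ ^ 2 ≤ (d : ℝ) := by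
    have hle : ‖P i j‖ ^ 2 ≤ ∑ k, ∑ l, ‖P l k‖ ^ 2 := by
      have h1' : ‖P i j‖ ^ 2 ≤ ∑ l, ‖P l j‖ ^ 2 :=
        Finset.single_le_sum (f := fun l => ‖P l j‖ ^ 2)
          (fun l _ => sq_nonneg _) (Finset.mem_univ i)
      refine h1'.trans ?_
      exact Finset.single_le_sum (f := fun k => ∑ l, ‖P l k‖ ^ 2)
        (fun k _ => Finset.sum_nonneg fun l _ => sq_nonneg _) (Finset.mem_univ j)
    calc ‖P i j‖ ^ 2 ≤ ∑ k, ∑ l, ‖P l k‖ ^ 2 := hle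
      _ = (P * P).trace.re := hsum.symm
      _ ≤ P.trace.re := hPP
      _ ≤ d := htr
  have := Real.sqrt_le_sqrt hone
  rwa [Real.sqrt_sq (norm_nonneg _)] at this

lemma isCompact_box (c : ℝ) :
    IsCompact {P : Matrix (Fin d) (Fin d) ℂ | ∀ i j, ‖P i j‖ ≤ c} := by
  have : {P : Matrix (Fin d) (Fin d) ℂ | ∀ i j, ‖P i j‖ ≤ c}
      = Set.pi Set.univ (fun _ : Fin d =>
          Set.pi Set.univ fun _ : Fin d => Metric.closedBall (0 : ℂ) c) := by
    ext P
    constructor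
    · intro h i _ j _
      simpa [Metric.mem_closedBall, Complex.dist_eq] using h i j
    · intro h i j
      have := h i (Set.mem_univ i) j (Set.mem_univ j)
      simpa [Metric.mem_closedBall, Complex.dist_eq] using this
  rw [this]
  exact isCompact_univ_pi fun i => isCompact_univ_pi fun j => isCompact_closedBall _ _

lemma isCompact_K : IsCompact (K d) :=
  IsCompact.of_isClosed_subset (isCompact_box (Real.sqrt d)) isClosed_K
    (fun P hP => by exact fun i j => entry_norm_le hP.1 hP.2 i j)

noncomputable def f (ρ P : Matrix (Fin d) (Fin d) ℂ) : ℝ := ((ρ * P).trace).re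

lemma f_continuous (ρ : Matrix (Fin d) (Fin d) ℂ) : Continuous (f ρ) :=
  Complex.continuous_re.comp ((continuous_const.matrix_mul continuous_id).matrix_trace)

lemma f_add (ρ A B : Matrix (Fin d) (Fin d) ℂ) : f ρ (A + B) = f ρ A + f ρ B := by
  simp [f, mul_add, Matrix.trace_add]

lemma f_smul (ρ A : Matrix (Fin d) (Fin d) ℂ) (c : ℝ) :
    f ρ ((c : ℂ) • A) = c * f ρ A := by
  simp [f, Matrix.mul_smul, Matrix.trace_smul, Complex.mul_re]

lemma f_one_sub (ρ : Matrix (Fin d) (Fin d) ℂ) (hρ : ρ.trace = 1)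
    (P : Matrix (Fin d) (Fin d) ℂ) : f ρ (1 - P) = 1 - f ρ P := by
  simp [f, mul_sub, Matrix.trace_sub, Complex.sub_re, hρ]

lemma f_nonneg {ρ P : Matrix (Fin d) (Fin d) ℂ} (hρ : ρ.PosSemidef)
    (hP : P.PosSemidef) : 0 ≤ f ρ P := trace_mul_re_nonneg hρ hP

lemma f_le_one {ρ P : Matrix (Fin d) (Fin d) ℂ} (hρ : ρ.PosSemidef) (hρt : ρ.trace = 1)
    (hP : (1 - P).PosSemidef) : f ρ P ≤ 1 := by
  have h := f_nonneg hρ hP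
  rw [f_one_sub ρ hρt] at h
  linarith

noncomputable def V (ρ₁ ρ₂ : Matrix (Fin d) (Fin d) ℂ) (a : ℝ)
    (P : Matrix (Fin d) (Fin d) ℂ) : ℝ :=
  a * f ρ₁ P + (1 - a) * f ρ₂ (1 - P)

noncomputable def slope (ρ₁ ρ₂ : Matrix (Fin d) (Fin d) ℂ)
    (P : Matrix (Fin d) (Fin d) ℂ) : ℝ :=
  f ρ₁ P - f ρ₂ (1 - P)

lemma V_affine_in_a (ρ₁ ρ₂ : Matrix (Fin d) (Fin d) ℂ) (a b : ℝ)
    (P : Matrix (Fin d) (Fin d) ℂ) :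
    V ρ₁ ρ₂ a P = V ρ₁ ρ₂ b P + (a - b) * slope ρ₁ ρ₂ P := by
  simp only [V, slope]; ring

lemma V_continuous (ρ₁ ρ₂ : Matrix (Fin d) (Fin d) ℂ) (a : ℝ) :
    Continuous (V ρ₁ ρ₂ a) :=
  ((continuous_const.mul (f_continuous ρ₁)).add
    (continuous_const.mul ((f_continuous ρ₂).comp (continuous_const.sub continuous_id))))

lemma slope_continuous (ρ₁ ρ₂ : Matrix (Fin d) (Fin d) ℂ) :
    Continuous (slope ρ₁ ρ₂) :=
  (f_continuous ρ₁).sub ((f_continuous ρ₂).comp (continuous_const.sub continuous_id))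

lemma abs_slope_le {ρ₁ ρ₂ P : Matrix (Fin d) (Fin d) ℂ}
    (hρ₁ : ρ₁.PosSemidef) (ht₁ : ρ₁.trace = 1)
    (hρ₂ : ρ₂.PosSemidef) (ht₂ : ρ₂.trace = 1) (hP : P ∈ K d) :
    |slope ρ₁ ρ₂ P| ≤ 1 := by
  have h1 : 0 ≤ f ρ₁ P := f_nonneg hρ₁ hP.1
  have h2 : f ρ₁ P ≤ 1 := f_le_one hρ₁ ht₁ hP.2
  have h3 : 0 ≤ f ρ₂ (1 - P) := f_nonneg hρ₂ hP.2
  have h4 : f ρ₂ (1 - P) ≤ 1 := f_le_one hρ₂ ht₂ (by simpa using hP.1)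
  rw [abs_le]; constructor <;> [skip; skip] <;> simp [slope] <;> linarith

lemma exists_max (ρ₁ ρ₂ : Matrix (Fin d) (Fin d) ℂ) (a : ℝ) :
    ∃ P ∈ K d, ∀ Q ∈ K d, V ρ₁ ρ₂ a Q ≤ V ρ₁ ρ₂ a P :=
  by
    obtain ⟨x, hx, hmax⟩ := isCompact_K.exists_isMaxOn ⟨0, zero_mem_K⟩
      (V_continuous ρ₁ ρ₂ a).continuousOn
    exact ⟨x, hx, fun Q hQ => hmax hQ⟩

noncomputable def Popt (ρ₁ ρ₂ : Matrix (Fin d) (Fin d) ℂ) (a : ℝ) :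
    Matrix (Fin d) (Fin d) ℂ :=
  (exists_max ρ₁ ρ₂ a).choose

lemma Popt_mem (ρ₁ ρ₂ : Matrix (Fin d) (Fin d) ℂ) (a : ℝ) :
    Popt ρ₁ ρ₂ a ∈ K d := (exists_max ρ₁ ρ₂ a).choose_spec.1

lemma Popt_max (ρ₁ ρ₂ : Matrix (Fin d) (Fin d) ℂ) (a : ℝ) :
    ∀ Q ∈ K d, V ρ₁ ρ₂ a Q ≤ V ρ₁ ρ₂ a (Popt ρ₁ ρ₂ a) :=
  (exists_max ρ₁ ρ₂ a).choose_spec.2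

noncomputable def Vstar (ρ₁ ρ₂ : Matrix (Fin d) (Fin d) ℂ) (a : ℝ) : ℝ :=
  V ρ₁ ρ₂ a (Popt ρ₁ ρ₂ a)

lemma Vstar_lipschitz {ρ₁ ρ₂ : Matrix (Fin d) (Fin d) ℂ}
    (hρ₁ : ρ₁.PosSemidef) (ht₁ : ρ₁.trace = 1)
    (hρ₂ : ρ₂.PosSemidef) (ht₂ : ρ₂.trace = 1) (a b : ℝ) :
    Vstar ρ₁ ρ₂ a - Vstar ρ₁ ρ₂ b ≤ |a - b| := by
  have h1 : Vstar ρ₁ ρ₂ b ≥ V ρ₁ ρ₂ b (Popt ρ₁ ρ₂ a) :=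
    Popt_max ρ₁ ρ₂ b _ (Popt_mem ρ₁ ρ₂ a)
  have h2 : Vstar ρ₁ ρ₂ a = V ρ₁ ρ₂ b (Popt ρ₁ ρ₂ a)
      + (a - b) * slope ρ₁ ρ₂ (Popt ρ₁ ρ₂ a) := V_affine_in_a ρ₁ ρ₂ a b _
  have h3 : (a - b) * slope ρ₁ ρ₂ (Popt ρ₁ ρ₂ a) ≤ |a - b| := by
    calc (a - b) * slope ρ₁ ρ₂ (Popt ρ₁ ρ₂ a)
        ≤ |(a - b) * slope ρ₁ ρ₂ (Popt ρ₁ ρ₂ a)| := le_abs_self _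
      _ = |a - b| * |slope ρ₁ ρ₂ (Popt ρ₁ ρ₂ a)| := abs_mul _ _
      _ ≤ |a - b| * 1 := by
          exact mul_le_mul_of_nonneg_left
            (abs_slope_le hρ₁ ht₁ hρ₂ ht₂ (Popt_mem ρ₁ ρ₂ a)) (abs_nonneg _)
      _ = |a - b| := mul_one _
  linarith

lemma Vstar_continuous {ρ₁ ρ₂ : Matrix (Fin d) (Fin d) ℂ}
    (hρ₁ : ρ₁.PosSemidef) (ht₁ : ρ₁.trace = 1)
    (hρ₂ : ρ₂.PosSemidef) (ht₂ : ρ₂.trace = 1) :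
    Continuous (Vstar ρ₁ ρ₂) := by
  have : LipschitzWith 1 (Vstar ρ₁ ρ₂) := by
    refine LipschitzWith.of_dist_le_mul fun a b => ?_
    rw [Real.dist_eq, Real.dist_eq, NNReal.coe_one, one_mul, abs_sub_le_iff]
    constructor
    · exact Vstar_lipschitz hρ₁ ht₁ hρ₂ ht₂ a b
    · simpa [abs_sub_comm] using Vstar_lipschitz hρ₁ ht₁ hρ₂ ht₂ b a
  exact this.continuous

instance instFC : FirstCountableTopology (Matrix (Fin d) (Fin d) ℂ) :=
  inferInstanceAs (FirstCountableTopology (Fin d → Fin d → ℂ))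

lemma f_one (ρ : Matrix (Fin d) (Fin d) ℂ) (ht : ρ.trace = 1) : f ρ 1 = 1 := by
  simp [f, ht]

lemma Vstar_le_one {ρ₁ ρ₂ : Matrix (Fin d) (Fin d) ℂ}
    (hρ₁ : ρ₁.PosSemidef) (ht₁ : ρ₁.trace = 1)
    (hρ₂ : ρ₂.PosSemidef) (ht₂ : ρ₂.trace = 1) {a : ℝ} (ha : a ∈ Set.Icc (0:ℝ) 1) :
    Vstar ρ₁ ρ₂ a ≤ 1 := by
  have hm := Popt_mem ρ₁ ρ₂ a
  have h1 : f ρ₁ (Popt ρ₁ ρ₂ a) ≤ 1 := f_le_one hρ₁ ht₁ hm.2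
  have h2 : f ρ₂ (1 - Popt ρ₁ ρ₂ a) ≤ 1 := f_le_one hρ₂ ht₂ (by simpa using hm.1)
  have h3 : 0 ≤ f ρ₁ (Popt ρ₁ ρ₂ a) := f_nonneg hρ₁ hm.1
  have h4 : 0 ≤ f ρ₂ (1 - Popt ρ₁ ρ₂ a) := f_nonneg hρ₂ hm.2
  have := ha.1; have := ha.2
  calc Vstar ρ₁ ρ₂ a = a * f ρ₁ (Popt ρ₁ ρ₂ a)
        + (1 - a) * f ρ₂ (1 - Popt ρ₁ ρ₂ a) := rfl
    _ ≤ a * 1 + (1 - a) * 1 := by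
        gcongr <;> linarith
    _ = 1 := by ring

lemma one_le_Vstar_zero (ρ₁ ρ₂ : Matrix (Fin d) (Fin d) ℂ) (ht₂ : ρ₂.trace = 1) :
    1 ≤ Vstar ρ₁ ρ₂ 0 := by
  have := Popt_max ρ₁ ρ₂ 0 0 zero_mem_K
  have h0 : V ρ₁ ρ₂ 0 0 = 1 := by simp [V, f_one ρ₂ ht₂]
  rw [h0] at this; exact this

lemma one_le_Vstar_one (ρ₁ ρ₂ : Matrix (Fin d) (Fin d) ℂ) (ht₁ : ρ₁.trace = 1) :
    1 ≤ Vstar ρ₁ ρ₂ 1 := by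
  have := Popt_max ρ₁ ρ₂ 1 1 one_mem_K
  have h0 : V ρ₁ ρ₂ 1 1 = 1 := by simp [V, f_one ρ₁ ht₁]
  rw [h0] at this; exact this

lemma exists_interior_min {ρ₁ ρ₂ : Matrix (Fin d) (Fin d) ℂ}
    (hρ₁ : ρ₁.PosSemidef) (ht₁ : ρ₁.trace = 1)
    (hρ₂ : ρ₂.PosSemidef) (ht₂ : ρ₂.trace = 1) :
    ∃ a₀ ∈ Set.Ioo (0:ℝ) 1, ∀ y ∈ Set.Icc (0:ℝ) 1, Vstar ρ₁ ρ₂ a₀ ≤ Vstar ρ₁ ρ₂ y := by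
  obtain ⟨a₁, ha₁, hmin⟩ := (isCompact_Icc : IsCompact (Set.Icc (0:ℝ) 1)).exists_isMinOn (f := Vstar ρ₁ ρ₂)
    ⟨0, Set.mem_Icc.mpr (by norm_num)⟩ (Vstar_continuous hρ₁ ht₁ hρ₂ ht₂).continuousOn
  by_cases hint : a₁ ∈ Set.Ioo (0:ℝ) 1
  · exact ⟨a₁, hint, fun y hy => hmin hy⟩
  · have hend : a₁ = 0 ∨ a₁ = 1 := by
      rcases ha₁ with ⟨h0, h1⟩
      rcases eq_or_lt_of_le h0 with h | h
      · exact Or.inl h.symm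
      rcases eq_or_lt_of_le h1 with h' | h'
      · exact Or.inr h'
      exact absurd ⟨h, h'⟩ hint
    have hge1 : 1 ≤ Vstar ρ₁ ρ₂ a₁ := by
      rcases hend with h | h <;> subst h
      · exact one_le_Vstar_zero ρ₁ ρ₂ ht₂
      · exact one_le_Vstar_one ρ₁ ρ₂ ht₁
    refine ⟨1/2, Set.mem_Ioo.mpr (by norm_num), fun y hy => ?_⟩
    have h1 : Vstar ρ₁ ρ₂ (1/2) ≤ 1 :=
      Vstar_le_one hρ₁ ht₁ hρ₂ ht₂ (Set.mem_Icc.mpr (by norm_num))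
    have h2 : Vstar ρ₁ ρ₂ a₁ ≤ Vstar ρ₁ ρ₂ y := hmin hy
    linarith

lemma Vstar_eq (ρ₁ ρ₂ : Matrix (Fin d) (Fin d) ℂ) (a : ℝ) :
    Vstar ρ₁ ρ₂ a = V ρ₁ ρ₂ a (Popt ρ₁ ρ₂ a) := rfl

lemma exists_opt_slope_nonpos {ρ₁ ρ₂ : Matrix (Fin d) (Fin d) ℂ}
    (hρ₁ : ρ₁.PosSemidef) (ht₁ : ρ₁.trace = 1)
    (hρ₂ : ρ₂.PosSemidef) (ht₂ : ρ₂.trace = 1)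
    {a₀ : ℝ} (h0 : 0 < a₀) (h1 : a₀ ≤ 1)
    (hmin : ∀ y ∈ Set.Icc (0:ℝ) 1, Vstar ρ₁ ρ₂ a₀ ≤ Vstar ρ₁ ρ₂ y) :
    ∃ B ∈ K d, (∀ Q ∈ K d, V ρ₁ ρ₂ a₀ Q ≤ V ρ₁ ρ₂ a₀ B) ∧ slope ρ₁ ρ₂ B ≤ 0 := by
  set aseq : ℕ → ℝ := fun n => a₀ - a₀ / (n + 1) with haseq
  have hpos : ∀ n : ℕ, 0 < a₀ / (n + 1) := fun n =>
    div_pos h0 (by positivity)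
  have hle : ∀ n : ℕ, a₀ / (n + 1) ≤ a₀ := fun n => by
    rw [div_le_iff₀ (by positivity : (0:ℝ) < (n:ℝ) + 1)]
    nlinarith [Nat.cast_nonneg (α := ℝ) n]
  have hmem : ∀ n, aseq n ∈ Set.Icc (0:ℝ) 1 := fun n => by
    constructor
    · simp only [haseq]; linarith [hle n]
    · simp only [haseq]; linarith [hpos n]
  have htendaseq : Filter.Tendsto aseq Filter.atTop (nhds a₀) := by
    have h' : Filter.Tendsto (fun n : ℕ => a₀ / ((n:ℝ) + 1)) Filter.atTop (nhds 0) := by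
      have := (tendsto_const_div_atTop_nhds_zero_nat a₀).comp
        (Filter.tendsto_add_atTop_nat 1)
      simpa [Function.comp_def, Nat.cast_add, Nat.cast_one] using this
    have := Filter.Tendsto.const_sub a₀ h'
    simpa using this
  set x : ℕ → Matrix (Fin d) (Fin d) ℂ := fun n => Popt ρ₁ ρ₂ (aseq n) with hx
  have hslope_n : ∀ n, slope ρ₁ ρ₂ (x n) ≤ 0 := by
    intro n
    have k1 : V ρ₁ ρ₂ a₀ (x n) ≤ Vstar ρ₁ ρ₂ a₀ :=
      Popt_max ρ₁ ρ₂ a₀ (x n) (Popt_mem ρ₁ ρ₂ (aseq n))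
    have k2 : Vstar ρ₁ ρ₂ a₀ ≤ Vstar ρ₁ ρ₂ (aseq n) := hmin _ (hmem n)
    have k3 : V ρ₁ ρ₂ a₀ (x n)
        = V ρ₁ ρ₂ (aseq n) (x n) + (a₀ - aseq n) * slope ρ₁ ρ₂ (x n) :=
      V_affine_in_a ρ₁ ρ₂ a₀ (aseq n) (x n)
    have k4 : (a₀ - aseq n) * slope ρ₁ ρ₂ (x n) ≤ 0 := by
      have : Vstar ρ₁ ρ₂ (aseq n) = V ρ₁ ρ₂ (aseq n) (x n) := rfl
      linarith
    have hc : 0 < a₀ - aseq n := by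
      simp only [haseq]; linarith [hpos n]
    by_contra hcon
    push_neg at hcon
    have := mul_pos hc hcon
    linarith
  obtain ⟨B, hBK, φ, hφ, htend⟩ := isCompact_K.tendsto_subseq
    (fun n => Popt_mem ρ₁ ρ₂ (aseq n))
  refine ⟨B, hBK, ?_, ?_⟩
  · -- B is optimal at a₀
    have t1 : Filter.Tendsto (fun n => V ρ₁ ρ₂ a₀ (x (φ n))) Filter.atTop
        (nhds (V ρ₁ ρ₂ a₀ B)) :=
      ((V_continuous ρ₁ ρ₂ a₀).tendsto B).comp htend
    have t2 : Filter.Tendsto (fun n => V ρ₁ ρ₂ a₀ (x (φ n))) Filter.atTop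
        (nhds (Vstar ρ₁ ρ₂ a₀)) := by
      have e1 : ∀ n, V ρ₁ ρ₂ a₀ (x (φ n))
          = Vstar ρ₁ ρ₂ (aseq (φ n)) + (a₀ - aseq (φ n)) * slope ρ₁ ρ₂ (x (φ n)) :=
        fun n => V_affine_in_a ρ₁ ρ₂ a₀ (aseq (φ n)) (x (φ n))
      have tV : Filter.Tendsto (fun n => Vstar ρ₁ ρ₂ (aseq (φ n))) Filter.atTop
          (nhds (Vstar ρ₁ ρ₂ a₀)) :=
        ((Vstar_continuous hρ₁ ht₁ hρ₂ ht₂).tendsto a₀).comp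
          (htendaseq.comp hφ.tendsto_atTop)
      have tc : Filter.Tendsto (fun n => a₀ - aseq (φ n)) Filter.atTop (nhds 0) := by
        have := (Filter.Tendsto.const_sub a₀ (htendaseq.comp hφ.tendsto_atTop))
        simpa using this
      have ts : Filter.Tendsto (fun n => slope ρ₁ ρ₂ (x (φ n))) Filter.atTop
          (nhds (slope ρ₁ ρ₂ B)) := ((slope_continuous ρ₁ ρ₂).tendsto B).comp htend
      have tprod : Filter.Tendsto
          (fun n => (a₀ - aseq (φ n)) * slope ρ₁ ρ₂ (x (φ n))) Filter.atTop (nhds 0) := by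
        have := tc.mul ts
        simpa using this
      have := tV.add tprod
      rw [add_zero] at this
      simpa only [← e1] using this
    have heq : V ρ₁ ρ₂ a₀ B = Vstar ρ₁ ρ₂ a₀ := tendsto_nhds_unique t1 t2
    intro Q hQ
    rw [heq]
    exact Popt_max ρ₁ ρ₂ a₀ Q hQ
  · -- slope B ≤ 0
    have ts : Filter.Tendsto (fun n => slope ρ₁ ρ₂ (x (φ n))) Filter.atTop
        (nhds (slope ρ₁ ρ₂ B)) := ((slope_continuous ρ₁ ρ₂).tendsto B).comp htend
    exact le_of_tendsto ts (Filter.Eventually.of_forall fun n => hslope_n (φ n))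

lemma exists_opt_slope_nonneg {ρ₁ ρ₂ : Matrix (Fin d) (Fin d) ℂ}
    (hρ₁ : ρ₁.PosSemidef) (ht₁ : ρ₁.trace = 1)
    (hρ₂ : ρ₂.PosSemidef) (ht₂ : ρ₂.trace = 1)
    {a₀ : ℝ} (h0 : 0 ≤ a₀) (h1 : a₀ < 1)
    (hmin : ∀ y ∈ Set.Icc (0:ℝ) 1, Vstar ρ₁ ρ₂ a₀ ≤ Vstar ρ₁ ρ₂ y) :
    ∃ B ∈ K d, (∀ Q ∈ K d, V ρ₁ ρ₂ a₀ Q ≤ V ρ₁ ρ₂ a₀ B) ∧ 0 ≤ slope ρ₁ ρ₂ B := by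
  set aseq : ℕ → ℝ := fun n => a₀ + (1 - a₀) / (n + 1) with haseq
  have hpos : ∀ n : ℕ, 0 < (1 - a₀) / (n + 1) := fun n =>
    div_pos (by linarith) (by positivity)
  have hle : ∀ n : ℕ, (1 - a₀) / (n + 1) ≤ 1 - a₀ := fun n => by
    rw [div_le_iff₀ (by positivity : (0:ℝ) < (n:ℝ) + 1)]
    nlinarith [Nat.cast_nonneg (α := ℝ) n]
  have hmem : ∀ n, aseq n ∈ Set.Icc (0:ℝ) 1 := fun n => by
    constructor
    · simp only [haseq]; linarith [hpos n]
    · simp only [haseq]; linarith [hle n]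
  have htendaseq : Filter.Tendsto aseq Filter.atTop (nhds a₀) := by
    have h' : Filter.Tendsto (fun n : ℕ => (1 - a₀) / ((n:ℝ) + 1)) Filter.atTop (nhds 0) := by
      have := (tendsto_const_div_atTop_nhds_zero_nat (1 - a₀)).comp
        (Filter.tendsto_add_atTop_nat 1)
      simpa [Function.comp_def, Nat.cast_add, Nat.cast_one] using this
    have := Filter.Tendsto.const_add a₀ h'
    simpa using this
  set x : ℕ → Matrix (Fin d) (Fin d) ℂ := fun n => Popt ρ₁ ρ₂ (aseq n) with hx
  have hslope_n : ∀ n, 0 ≤ slope ρ₁ ρ₂ (x n) := by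
    intro n
    have k1 : V ρ₁ ρ₂ a₀ (x n) ≤ Vstar ρ₁ ρ₂ a₀ :=
      Popt_max ρ₁ ρ₂ a₀ (x n) (Popt_mem ρ₁ ρ₂ (aseq n))
    have k2 : Vstar ρ₁ ρ₂ a₀ ≤ Vstar ρ₁ ρ₂ (aseq n) := hmin _ (hmem n)
    have k3 : V ρ₁ ρ₂ a₀ (x n)
        = V ρ₁ ρ₂ (aseq n) (x n) + (a₀ - aseq n) * slope ρ₁ ρ₂ (x n) :=
      V_affine_in_a ρ₁ ρ₂ a₀ (aseq n) (x n)
    have k4 : (a₀ - aseq n) * slope ρ₁ ρ₂ (x n) ≤ 0 := by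
      have : Vstar ρ₁ ρ₂ (aseq n) = V ρ₁ ρ₂ (aseq n) (x n) := rfl
      linarith
    have hc : aseq n - a₀ > 0 := by
      simp only [haseq]; linarith [hpos n]
    by_contra hcon
    push_neg at hcon
    have h6 : (a₀ - aseq n) * slope ρ₁ ρ₂ (x n) > 0 := by
      have := mul_pos hc (neg_pos.mpr hcon)
      nlinarith
    linarith
  obtain ⟨B, hBK, φ, hφ, htend⟩ := isCompact_K.tendsto_subseq
    (fun n => Popt_mem ρ₁ ρ₂ (aseq n))
  refine ⟨B, hBK, ?_, ?_⟩
  · have t1 : Filter.Tendsto (fun n => V ρ₁ ρ₂ a₀ (x (φ n))) Filter.atTop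
        (nhds (V ρ₁ ρ₂ a₀ B)) :=
      ((V_continuous ρ₁ ρ₂ a₀).tendsto B).comp htend
    have t2 : Filter.Tendsto (fun n => V ρ₁ ρ₂ a₀ (x (φ n))) Filter.atTop
        (nhds (Vstar ρ₁ ρ₂ a₀)) := by
      have e1 : ∀ n, V ρ₁ ρ₂ a₀ (x (φ n))
          = Vstar ρ₁ ρ₂ (aseq (φ n)) + (a₀ - aseq (φ n)) * slope ρ₁ ρ₂ (x (φ n)) :=
        fun n => V_affine_in_a ρ₁ ρ₂ a₀ (aseq (φ n)) (x (φ n))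
      have tV : Filter.Tendsto (fun n => Vstar ρ₁ ρ₂ (aseq (φ n))) Filter.atTop
          (nhds (Vstar ρ₁ ρ₂ a₀)) :=
        ((Vstar_continuous hρ₁ ht₁ hρ₂ ht₂).tendsto a₀).comp
          (htendaseq.comp hφ.tendsto_atTop)
      have tc : Filter.Tendsto (fun n => a₀ - aseq (φ n)) Filter.atTop (nhds 0) := by
        have := (Filter.Tendsto.const_sub a₀ (htendaseq.comp hφ.tendsto_atTop))
        simpa using this
      have ts : Filter.Tendsto (fun n => slope ρ₁ ρ₂ (x (φ n))) Filter.atTop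
          (nhds (slope ρ₁ ρ₂ B)) := ((slope_continuous ρ₁ ρ₂).tendsto B).comp htend
      have tprod : Filter.Tendsto
          (fun n => (a₀ - aseq (φ n)) * slope ρ₁ ρ₂ (x (φ n))) Filter.atTop (nhds 0) := by
        have := tc.mul ts
        simpa using this
      have := tV.add tprod
      rw [add_zero] at this
      simpa only [← e1] using this
    have heq : V ρ₁ ρ₂ a₀ B = Vstar ρ₁ ρ₂ a₀ := tendsto_nhds_unique t1 t2
    intro Q hQ
    rw [heq]
    exact Popt_max ρ₁ ρ₂ a₀ Q hQ
  · have ts : Filter.Tendsto (fun n => slope ρ₁ ρ₂ (x (φ n))) Filter.atTop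
        (nhds (slope ρ₁ ρ₂ B)) := ((slope_continuous ρ₁ ρ₂).tendsto B).comp htend
    exact ge_of_tendsto ts (Filter.Eventually.of_forall fun n => hslope_n (φ n))

lemma smul_posSemidef {c : ℝ} (hc : 0 ≤ c) {A : Matrix (Fin d) (Fin d) ℂ}
    (hA : A.PosSemidef) : ((c : ℂ) • A).PosSemidef := by
  refine Matrix.PosSemidef.of_dotProduct_mulVec_nonneg ?_ ?_
  · have : ((c : ℂ) • A)ᴴ = (starRingEnd ℂ) (c : ℂ) • Aᴴ := Matrix.conjTranspose_smul _ _
    rw [Matrix.IsHermitian, this, Complex.conj_ofReal, hA.isHermitian.eq]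
  · intro x
    have h1 : ((c : ℂ) • A).mulVec x = (c : ℂ) • A.mulVec x := by
      rw [Matrix.smul_mulVec]
    rw [h1, dotProduct_smul, smul_eq_mul]
    exact mul_nonneg (Complex.zero_le_real.mpr hc) (hA.dotProduct_mulVec_nonneg x)

lemma comb_one (t : ℝ) :
    ((1 - t : ℝ) : ℂ) • (1 : Matrix (Fin d) (Fin d) ℂ) + ((t : ℝ) : ℂ) • 1 = 1 := by
  rw [← add_smul]
  push_cast
  simp

lemma comb_mem_K {t : ℝ} (h0 : 0 ≤ t) (h1 : t ≤ 1)
    {A B : Matrix (Fin d) (Fin d) ℂ} (hA : A ∈ K d) (hB : B ∈ K d) :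
    ((1 - t : ℝ) : ℂ) • A + ((t : ℝ) : ℂ) • B ∈ K d := by
  constructor
  · exact (smul_posSemidef (by linarith) hA.1).add (smul_posSemidef h0 hB.1)
  · have key : 1 - (((1 - t : ℝ) : ℂ) • A + ((t : ℝ) : ℂ) • B)
        = ((1 - t : ℝ) : ℂ) • (1 - A) + ((t : ℝ) : ℂ) • (1 - B) := by
      rw [smul_sub, smul_sub]
      have := comb_one (d := d) t
      rw [sub_add_sub_comm, this]
    rw [key]
    exact (smul_posSemidef (by linarith) hA.2).add (smul_posSemidef h0 hB.2)

lemma f_comb (ρ : Matrix (Fin d) (Fin d) ℂ) (t : ℝ) (A B : Matrix (Fin d) (Fin d) ℂ) :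
    f ρ (((1 - t : ℝ) : ℂ) • A + ((t : ℝ) : ℂ) • B) = (1 - t) * f ρ A + t * f ρ B := by
  rw [f_add, f_smul, f_smul]

lemma V_comb (ρ₁ ρ₂ : Matrix (Fin d) (Fin d) ℂ) (a t : ℝ) (A B : Matrix (Fin d) (Fin d) ℂ) :
    V ρ₁ ρ₂ a (((1 - t : ℝ) : ℂ) • A + ((t : ℝ) : ℂ) • B)
      = (1 - t) * V ρ₁ ρ₂ a A + t * V ρ₁ ρ₂ a B := by
  have key : (1 : Matrix (Fin d) (Fin d) ℂ) - (((1 - t : ℝ) : ℂ) • A + ((t : ℝ) : ℂ) • B)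
      = ((1 - t : ℝ) : ℂ) • (1 - A) + ((t : ℝ) : ℂ) • (1 - B) := by
    rw [smul_sub, smul_sub]
    have := comb_one (d := d) t
    rw [sub_add_sub_comm, this]
  simp only [V, f_comb, key]
  ring

lemma slope_comb (ρ₁ ρ₂ : Matrix (Fin d) (Fin d) ℂ) (t : ℝ) (A B : Matrix (Fin d) (Fin d) ℂ) :
    slope ρ₁ ρ₂ (((1 - t : ℝ) : ℂ) • A + ((t : ℝ) : ℂ) • B)
      = (1 - t) * slope ρ₁ ρ₂ A + t * slope ρ₁ ρ₂ B := by
  have key : (1 : Matrix (Fin d) (Fin d) ℂ) - (((1 - t : ℝ) : ℂ) • A + ((t : ℝ) : ℂ) • B)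
      = ((1 - t : ℝ) : ℂ) • (1 - A) + ((t : ℝ) : ℂ) • (1 - B) := by
    rw [smul_sub, smul_sub]
    have := comb_one (d := d) t
    rw [sub_add_sub_comm, this]
  simp only [slope, f_comb, key]
  ring

end BayesAux

namespace BayesAux

/-- The final combination step and the main existence lemma. -/
lemma main_lemma {d : ℕ} {ρ₁ ρ₂ : Matrix (Fin d) (Fin d) ℂ}
    (hps₁ : ρ₁.PosSemidef) (ht₁ : ρ₁.trace = 1)
    (hps₂ : ρ₂.PosSemidef) (ht₂ : ρ₂.trace = 1) :
    ∃ a₀ ∈ Set.Icc (0:ℝ) 1, ∃ B ∈ K d,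
      (∀ Q ∈ K d, V ρ₁ ρ₂ a₀ Q ≤ V ρ₁ ρ₂ a₀ B) ∧ slope ρ₁ ρ₂ B = 0 := by
  obtain ⟨a₀, ha₀, hmin⟩ := exists_interior_min hps₁ ht₁ hps₂ ht₂
  obtain ⟨Bp, hBpK, hBpOpt, hBpS⟩ :=
    exists_opt_slope_nonneg hps₁ ht₁ hps₂ ht₂ ha₀.1.le ha₀.2 hmin
  obtain ⟨Bm, hBmK, hBmOpt, hBmS⟩ :=
    exists_opt_slope_nonpos hps₁ ht₁ hps₂ ht₂ ha₀.1 ha₀.2.le hmin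
  set sp := slope ρ₁ ρ₂ Bp with hsp
  set sm := slope ρ₁ ρ₂ Bm with hsm
  by_cases hzero : sp - sm = 0
  · -- both slopes are zero; take B = Bp
    have hspz : sp = 0 := by
      have : sp = sm := by linarith [sub_eq_zero.mp hzero]
      linarith
    exact ⟨a₀, ⟨ha₀.1.le, ha₀.2.le⟩, Bp, hBpK, hBpOpt, hspz⟩
  · have hd : 0 < sp - sm := lt_of_le_of_ne (by linarith) (Ne.symm hzero)
    set t : ℝ := sp / (sp - sm) with htdef
    have ht0 : 0 ≤ t := div_nonneg hBpS hd.le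
    have ht1 : t ≤ 1 := (div_le_one hd).mpr (by linarith)
    set B := ((1 - t : ℝ) : ℂ) • Bp + ((t : ℝ) : ℂ) • Bm with hBdef
    have hBK : B ∈ K d := comb_mem_K ht0 ht1 hBpK hBmK
    have hslopeB : slope ρ₁ ρ₂ B = 0 := by
      rw [hBdef, slope_comb, ← hsp, ← hsm, htdef]
      field_simp
      ring
    have hVeq : V ρ₁ ρ₂ a₀ Bp = V ρ₁ ρ₂ a₀ Bm :=
      le_antisymm (hBmOpt Bp hBpK) (hBpOpt Bm hBmK)
    have hVB : ∀ Q ∈ K d, V ρ₁ ρ₂ a₀ Q ≤ V ρ₁ ρ₂ a₀ B := by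
      intro Q hQ
      have h2 : V ρ₁ ρ₂ a₀ B = V ρ₁ ρ₂ a₀ Bp := by
        rw [hBdef, V_comb, ← hVeq]; ring
      rw [h2]
      exact hBpOpt Q hQ
    exact ⟨a₀, ⟨ha₀.1.le, ha₀.2.le⟩, B, hBK, hVB, hslopeB⟩

end BayesAux

/-- For any pair of quantum states there exist a prior `a₀ ∈ [0,1]` and a
Bayes-optimal POVM for that prior with equal probabilities of correct detection. -/
theorem exists_bayes_opt_with_equal_detection
    {d : ℕ} (ρ₁ ρ₂ : Matrix (Fin d) (Fin d) ℂ)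
    (hρ₁ : IsQState ρ₁) (hρ₂ : IsQState ρ₂) :
    ∃ a₀ ∈ Set.Icc (0 : ℝ) 1, ∃ B₁ B₂ : Matrix (Fin d) (Fin d) ℂ,
      IsBayesOpt ρ₁ ρ₂ a₀ B₁ B₂ ∧
      (ρ₁ * B₁).trace.re = (ρ₂ * B₂).trace.re := by
  obtain ⟨hps₁, ht₁⟩ := hρ₁
  obtain ⟨hps₂, ht₂⟩ := hρ₂
  obtain ⟨a₀, ha₀, B, hBK, hBOpt, hBS⟩ := BayesAux.main_lemma hps₁ ht₁ hps₂ ht₂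
  refine ⟨a₀, ha₀, B, 1 - B, ⟨⟨hBK.1, hBK.2, by abel⟩, ?_⟩, ?_⟩
  · intro P₁ P₂ hP
    have hP2 : P₂ = 1 - P₁ := eq_sub_of_add_eq' hP.2.2
    subst hP2
    have hP1K : P₁ ∈ BayesAux.K d := ⟨hP.1, hP.2.1⟩
    exact hBOpt P₁ hP1K
  · have : BayesAux.f ρ₁ B - BayesAux.f ρ₂ (1 - B) = 0 := hBS
    have h2 : BayesAux.f ρ₁ B = BayesAux.f ρ₂ (1 - B) := by linarith
    exact h2
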